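/- Let d ≥ 1, let R > 0, x₀ ∈ ℝ^d, and let s, ŝ : ℝ^d → ℝ^d be continuous vector fields. Suppose there exist δ > 0 and m > 0 such that for every y ∈ ∂B_R(x₀): ‖s(y) − ŝ(y)‖ < δ, ‖s(y)‖ > m, ‖ŝ(y)‖ > m, and ‖t·s(y) + (1−t)·ŝ(y)‖ ≥ m for every t ∈ [0,1]. Then for p = 1, |Δ̄_1 s(x₀) − Δ̄_1 ŝ(x₀)| ≤ (σ(∂B_R(x₀)) / vol(B_R(x₀))) · 2δ/m. -/

import Mathlib

open MeasureTheory Metric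
open scoped InnerProductSpace


noncomputable def embF (n : ℕ) (i : Fin (n+1)) (c : ℝ) :
    EuclideanSpace ℝ (Fin n) → EuclideanSpace ℝ (Fin (n+1)) :=
  fun y => (EuclideanSpace.equiv (Fin (n+1)) ℝ).symm
    (i.insertNth c (EuclideanSpace.equiv (Fin n) ℝ y))

lemma embF_apply (n : ℕ) (i : Fin (n+1)) (c : ℝ) (y : EuclideanSpace ℝ (Fin n))
    (j : Fin (n+1)) :
    embF n i c y j = i.insertNth (α := fun _ => ℝ) c (fun k => y k) j := rfl

lemma embF_isometry (n : ℕ) (i : Fin (n+1)) (c : ℝ) : Isometry (embF n i c) := by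
  apply Isometry.of_dist_eq
  intro y z
  rw [EuclideanSpace.dist_eq, EuclideanSpace.dist_eq]
  congr 1
  rw [Fin.sum_univ_succAbove _ i]
  simp only [embF_apply, Fin.insertNth_apply_same, Fin.insertNth_apply_succAbove]
  simp

lemma coord_le_norm {n : ℕ} (x : EuclideanSpace ℝ (Fin n)) (i : Fin n) : |x i| ≤ ‖x‖ := by
  rw [EuclideanSpace.norm_eq]
  calc |x i| = √(‖x i‖ ^ 2) := by rw [Real.sqrt_sq_eq_abs, Real.norm_eq_abs, abs_abs]
    _ ≤ √(∑ j, ‖x j‖ ^ 2) := by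
        apply Real.sqrt_le_sqrt
        exact Finset.single_le_sum (f := fun j => ‖x j‖ ^ 2)
          (fun j _ => by positivity) (Finset.mem_univ i)

lemma normalize_sub_le {E : Type*} [NormedAddCommGroup E] [NormedSpace ℝ E]
    (a b : E) (m : ℝ) (hm : 0 < m) (ha : m ≤ ‖a‖) (hb : m ≤ ‖b‖) :
    ‖‖a‖⁻¹ • a - ‖b‖⁻¹ • b‖ ≤ 2 / m * ‖a - b‖ := by
  have ha0 : (0:ℝ) < ‖a‖ := hm.trans_le ha
  have hb0 : (0:ℝ) < ‖b‖ := hm.trans_le hb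
  have key : ‖a‖⁻¹ • a - ‖b‖⁻¹ • b = ‖a‖⁻¹ • (a - b) + (‖a‖⁻¹ - ‖b‖⁻¹) • b := by
    rw [smul_sub, sub_smul]; abel
  rw [key]
  have h1 : ‖‖a‖⁻¹ • (a - b)‖ = ‖a‖⁻¹ * ‖a - b‖ := by
    rw [norm_smul, norm_inv, norm_norm]
  have h2 : ‖(‖a‖⁻¹ - ‖b‖⁻¹) • b‖ = |‖a‖⁻¹ - ‖b‖⁻¹| * ‖b‖ := by
    rw [norm_smul, Real.norm_eq_abs]
  have h3 : |‖a‖⁻¹ - ‖b‖⁻¹| ≤ ‖a - b‖ / (‖a‖ * ‖b‖) := by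
    have heq : ‖a‖⁻¹ - ‖b‖⁻¹ = (‖b‖ - ‖a‖) / (‖a‖ * ‖b‖) := by field_simp
    rw [heq, abs_div, abs_of_pos (mul_pos ha0 hb0)]
    gcongr
    exact (abs_norm_sub_norm_le b a).trans (le_of_eq (norm_sub_rev b a))
  calc ‖‖a‖⁻¹ • (a - b) + (‖a‖⁻¹ - ‖b‖⁻¹) • b‖
      ≤ ‖‖a‖⁻¹ • (a - b)‖ + ‖(‖a‖⁻¹ - ‖b‖⁻¹) • b‖ := norm_add_le _ _
    _ ≤ ‖a‖⁻¹ * ‖a - b‖ + (‖a - b‖ / (‖a‖ * ‖b‖)) * ‖b‖ := by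
        rw [h1, h2]; gcongr
    _ = 2 / ‖a‖ * ‖a - b‖ := by field_simp; ring
    _ ≤ 2 / m * ‖a - b‖ := by gcongr

lemma lip_normalize {E : Type*} [NormedAddCommGroup E] [NormedSpace ℝ E] :
    LipschitzOnWith 2 (fun x : E => ‖x‖⁻¹ • x) {x : E | 1 ≤ ‖x‖} := by
  apply LipschitzOnWith.of_dist_le_mul
  intro x hx y hy
  rw [dist_eq_norm, dist_eq_norm]
  have := normalize_sub_le x y 1 one_pos hx hy
  simpa using this

lemma sphere_hmeas_lt_top (n : ℕ) (x₀ : EuclideanSpace ℝ (Fin (n+1))) (R : ℝ)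
    (hR : 0 < R) : μH[(n : ℝ)] (sphere x₀ R) < ⊤ := by
  classical
  set B : Set (EuclideanSpace ℝ (Fin n)) := closedBall 0 (n+2) with hB
  set F : Fin (n+1) → ℝ → EuclideanSpace ℝ (Fin n) → EuclideanSpace ℝ (Fin (n+1)) :=
    fun i c y => x₀ + R • (‖embF n i c y‖⁻¹ • embF n i c y) with hF
  have hFlip : ∀ (i : Fin (n+1)) (c : ℝ), |c| = 1 →
      LipschitzOnWith (1 * ‖R‖₊ * (2 * 1)) (F i c) B := by
    intro i c hc
    have hmaps : Set.MapsTo (embF n i c) Set.univ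
        {x : EuclideanSpace ℝ (Fin (n+1)) | 1 ≤ ‖x‖} := by
      intro y _
      have h1 : |embF n i c y i| ≤ ‖embF n i c y‖ := coord_le_norm _ i
      have h2 : embF n i c y i = c := by
        rw [embF_apply, Fin.insertNth_apply_same]
      rw [h2, hc] at h1
      exact h1
    have comp1 : LipschitzOnWith (2 * 1)
        ((fun x : EuclideanSpace ℝ (Fin (n+1)) => ‖x‖⁻¹ • x) ∘ embF n i c)
        Set.univ :=
      lip_normalize.comp
        ((embF_isometry n i c).lipschitz.lipschitzOnWith (s := Set.univ)) hmaps
    have hA : LipschitzWith (1 * ‖R‖₊)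
        (fun x : EuclideanSpace ℝ (Fin (n+1)) => x₀ + R • x) :=
      (isometry_add_left x₀).lipschitz.comp (lipschitzWith_smul R)
    have comp2 : LipschitzOnWith (1 * ‖R‖₊ * (2 * 1))
        ((fun x : EuclideanSpace ℝ (Fin (n+1)) => x₀ + R • x) ∘
          (fun x : EuclideanSpace ℝ (Fin (n+1)) => ‖x‖⁻¹ • x) ∘ embF n i c)
        Set.univ :=
      (hA.lipschitzOnWith (s := Set.univ)).comp comp1 (Set.mapsTo_univ _ _)
    exact comp2.mono (Set.subset_univ _)
  have cover : sphere x₀ R ⊆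
      ⋃ (i : Fin (n+1)), ⋃ (b : Bool), F i (cond b 1 (-1)) '' B := by
    intro y hy
    have hdist : ‖y - x₀‖ = R := by
      rw [← dist_eq_norm]; exact mem_sphere.1 hy
    set u : EuclideanSpace ℝ (Fin (n+1)) := R⁻¹ • (y - x₀) with hu_def
    have hu : ‖u‖ = 1 := by
      rw [hu_def, norm_smul, norm_inv, Real.norm_eq_abs, abs_of_pos hR, hdist]
      field_simp
    obtain ⟨i, -, hi⟩ := Finset.exists_max_image Finset.univ (fun j => |u j|)
      ⟨0, Finset.mem_univ 0⟩
    have hsum : ∑ j, ‖u j‖ ^ 2 = 1 := by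
      have h := EuclideanSpace.norm_eq u
      rw [hu] at h
      exact (Real.sqrt_eq_one.1 h.symm)
    have hsumle : (1:ℝ) ≤ (n+1) * |u i| ^ 2 := by
      have h : ∑ j, ‖u j‖ ^ 2 ≤ ∑ _j : Fin (n+1), |u i| ^ 2 := by
        apply Finset.sum_le_sum
        intro j _
        rw [Real.norm_eq_abs]
        exact pow_le_pow_left₀ (abs_nonneg _) (hi j (Finset.mem_univ j)) 2
      rw [hsum] at h
      simpa [Finset.sum_const, Finset.card_univ] using h
    have hile : |u i| ≤ 1 := (coord_le_norm u i).trans (le_of_eq hu)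
    have hipos : (0:ℝ) < |u i| := by
      rcases (abs_nonneg (u i)).lt_or_eq with h | h
      · exact h
      · exfalso; rw [← h] at hsumle; norm_num at hsumle
    have hcle : |u i|⁻¹ ≤ n + 1 := by
      rw [inv_eq_one_div, div_le_iff₀ hipos]
      nlinarith [mul_nonneg (mul_nonneg (by positivity : (0:ℝ) ≤ (n:ℝ)+1)
        (abs_nonneg (u i))) (sub_nonneg.2 hile)]
    set c : ℝ := |u i|⁻¹ with hc_def
    have hcpos : 0 < c := inv_pos.2 hipos
    set σ : ℝ := c * u i with hσ_def
    have hσabs : |σ| = 1 := by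
      rw [hσ_def, abs_mul, abs_of_pos hcpos, hc_def]
      field_simp
    set z : EuclideanSpace ℝ (Fin n) :=
      (EuclideanSpace.equiv (Fin n) ℝ).symm (i.removeNth (fun j => c * u j)) with hz_def
    have hemb : embF n i σ z = c • u := by
      ext j
      rw [embF_apply]
      have h2 : (fun k => z k) = i.removeNth (fun j => c * u j) := rfl
      rw [h2]
      have h3 : σ = (fun j => c * u j) i := rfl
      rw [h3]
      exact congrFun (Fin.insertNth_self_removeNth (α := fun _ : Fin (n+1) => ℝ)
        i (fun j => c * u j)) j
    have hnormcu : ‖c • u‖ = c := by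
      rw [norm_smul, Real.norm_eq_abs, abs_of_pos hcpos, hu, mul_one]
    have hFz : F i σ z = y := by
      rw [hF]
      simp only
      rw [hemb, hnormcu]
      have hcc : c⁻¹ • (c • u) = u := by
        rw [smul_smul, inv_mul_cancel₀ (ne_of_gt hcpos), one_smul]
      rw [hcc, hu_def, smul_smul, mul_inv_cancel₀ (ne_of_gt hR), one_smul]
      abel
    have hzB : z ∈ B := by
      rw [hB, mem_closedBall]
      have e1 : dist z 0 = dist (embF n i σ z) (embF n i σ 0) :=
        ((embF_isometry n i σ).dist_eq z 0).symm
      have e2 : dist (embF n i σ z) (embF n i σ 0) ≤ ‖embF n i σ z‖ + ‖embF n i σ 0‖ :=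
        dist_le_norm_add_norm _ _
      have e3 : ‖embF n i σ z‖ = c := by rw [hemb, hnormcu]
      have e4 : ‖embF n i σ 0‖ = 1 := by
        rw [EuclideanSpace.norm_eq, Fin.sum_univ_succAbove _ i]
        simp only [embF_apply, Fin.insertNth_apply_same, Fin.insertNth_apply_succAbove]
        have h0 : ∀ k : Fin n, ((0 : EuclideanSpace ℝ (Fin n)) k) = 0 := fun k => rfl
        simp [h0, Real.norm_eq_abs, Real.sqrt_sq_eq_abs, hσabs]
      calc dist z 0 = dist (embF n i σ z) (embF n i σ 0) := e1
        _ ≤ ‖embF n i σ z‖ + ‖embF n i σ 0‖ := e2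
        _ = c + 1 := by rw [e3, e4]
        _ ≤ (n + 1) + 1 := by linarith
        _ = n + 2 := by ring
    refine Set.mem_iUnion.2 ⟨i, Set.mem_iUnion.2 ?_⟩
    rcases (abs_eq (le_of_lt one_pos)).1 hσabs with h1 | h2
    · exact ⟨true, ⟨z, hzB, h1 ▸ hFz⟩⟩
    · exact ⟨false, ⟨z, hzB, h2 ▸ hFz⟩⟩
  have hBfin : μH[(n : ℝ)] B < ⊤ := by
    rw [show ((n:ℕ):ℝ) = ((Module.finrank ℝ (EuclideanSpace ℝ (Fin n)) : ℕ) : ℝ) by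
      rw [finrank_euclideanSpace_fin]]
    exact (isCompact_closedBall _ _).measure_lt_top
  have hterm : ∀ (i : Fin (n+1)) (b : Bool),
      μH[(n : ℝ)] (F i (cond b 1 (-1)) '' B) < ⊤ := by
    intro i b
    have hc : |(cond b 1 (-1) : ℝ)| = 1 := by cases b <;> norm_num
    calc μH[(n : ℝ)] (F i (cond b 1 (-1)) '' B)
        ≤ (1 * ‖R‖₊ * (2 * 1) : NNReal) ^ (n:ℝ) * μH[(n : ℝ)] B :=
          (hFlip i _ hc).hausdorffMeasure_image_le (by positivity)
      _ < ⊤ := ENNReal.mul_lt_top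
          (ENNReal.rpow_lt_top_of_nonneg (by positivity) ENNReal.coe_ne_top) hBfin
  refine (measure_mono cover).trans_lt ?_
  refine (measure_iUnion_le _).trans_lt ?_
  rw [tsum_fintype]
  refine ENNReal.sum_lt_top.2 (fun i _ => ?_)
  refine (measure_iUnion_le _).trans_lt ?_
  rw [tsum_fintype]
  exact ENNReal.sum_lt_top.2 (fun b _ => hterm i b)

/-- Boundary-formulation average 1-Laplace of a vector field `s` at `x₀` with radius `R`:
`(1 / vol(B_R x₀)) ∫_{∂B_R x₀} ⟪s y / ‖s y‖, (y - x₀)/R⟫ dσ(y)`,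
where `σ` is the `(d-1)`-dimensional Hausdorff measure. -/
noncomputable def avg1Laplace (d : ℕ)
    (s : EuclideanSpace ℝ (Fin d) → EuclideanSpace ℝ (Fin d))
    (x₀ : EuclideanSpace ℝ (Fin d)) (R : ℝ) : ℝ :=
  (volume (ball x₀ R)).toReal⁻¹ *
    ∫ y in sphere x₀ R, ⟪‖s y‖⁻¹ • s y, R⁻¹ • (y - x₀)⟫_ℝ ∂(μH[(d : ℝ) - 1])

/-- error bound for the boundary-formulation average 1-Laplace. -/
theorem avg1Laplace_error_bound (d : ℕ) (hd : 1 ≤ d)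
    (R : ℝ) (hR : 0 < R) (x₀ : EuclideanSpace ℝ (Fin d))
    (s sHat : EuclideanSpace ℝ (Fin d) → EuclideanSpace ℝ (Fin d))
    (hs : Continuous s) (hsHat : Continuous sHat)
    (δ m : ℝ) (hδ : 0 < δ) (hm : 0 < m)
    (ha : ∀ y ∈ sphere x₀ R, ‖s y - sHat y‖ < δ)
    (hb : ∀ y ∈ sphere x₀ R, m < ‖s y‖ ∧ m < ‖sHat y‖)
    (hc : ∀ y ∈ sphere x₀ R, ∀ t ∈ Set.Icc (0 : ℝ) 1, m ≤ ‖t • s y + (1 - t) • sHat y‖) :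
    |avg1Laplace d s x₀ R - avg1Laplace d sHat x₀ R| ≤
      ((μH[(d : ℝ) - 1] (sphere x₀ R)).toReal / (volume (ball x₀ R)).toReal) *
        (2 * δ / m) := by
  obtain ⟨n, rfl⟩ : ∃ n, d = n + 1 := ⟨d - 1, by omega⟩
  have hecast : ((n + 1 : ℕ) : ℝ) - 1 = (n : ℝ) := by push_cast; ring
  rw [avg1Laplace, avg1Laplace, hecast]
  have hfin : μH[(n : ℝ)] (sphere x₀ R) < ⊤ := sphere_hmeas_lt_top n x₀ R hR
  set f := fun y : EuclideanSpace ℝ (Fin (n+1)) =>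
    ⟪‖s y‖⁻¹ • s y, R⁻¹ • (y - x₀)⟫_ℝ with hf_def
  set g := fun y : EuclideanSpace ℝ (Fin (n+1)) =>
    ⟪‖sHat y‖⁻¹ • sHat y, R⁻¹ • (y - x₀)⟫_ℝ with hg_def
  haveI : IsFiniteMeasure ((μH[(n : ℝ)] :
      Measure (EuclideanSpace ℝ (Fin (n+1)))).restrict (sphere x₀ R)) :=
    ⟨by rwa [Measure.restrict_apply_univ]⟩
  have hw : ∀ y ∈ sphere x₀ R, ‖R⁻¹ • (y - x₀)‖ = 1 := by
    intro y hy
    have hdist : ‖y - x₀‖ = R := by rw [← dist_eq_norm]; exact mem_sphere.1 hy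
    rw [norm_smul, norm_inv, Real.norm_eq_abs, abs_of_pos hR, hdist]
    field_simp
  have hmf : AEStronglyMeasurable f
      ((μH[(n : ℝ)] : Measure (EuclideanSpace ℝ (Fin (n+1)))).restrict (sphere x₀ R)) := by
    apply Measurable.aestronglyMeasurable
    exact Measurable.inner ((hs.norm.measurable.inv).smul hs.measurable)
      (((continuous_id.sub continuous_const).const_smul R⁻¹)).measurable
  have hmg : AEStronglyMeasurable g
      ((μH[(n : ℝ)] : Measure (EuclideanSpace ℝ (Fin (n+1)))).restrict (sphere x₀ R)) := by
    apply Measurable.aestronglyMeasurable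
    exact Measurable.inner ((hsHat.norm.measurable.inv).smul hsHat.measurable)
      (((continuous_id.sub continuous_const).const_smul R⁻¹)).measurable
  have hbf : ∀ y ∈ sphere x₀ R, ‖f y‖ ≤ 1 := by
    intro y hy
    have h1 : ‖s y‖ ≠ 0 := (hm.trans (hb y hy).1).ne'
    have h2 : ‖‖s y‖⁻¹ • s y‖ = 1 := by
      rw [norm_smul, norm_inv, norm_norm, inv_mul_cancel₀ h1]
    calc ‖f y‖ = |⟪‖s y‖⁻¹ • s y, R⁻¹ • (y - x₀)⟫_ℝ| := rfl
      _ ≤ ‖‖s y‖⁻¹ • s y‖ * ‖R⁻¹ • (y - x₀)‖ := abs_real_inner_le_norm _ _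
      _ = 1 := by rw [h2, hw y hy, mul_one]
  have hbg : ∀ y ∈ sphere x₀ R, ‖g y‖ ≤ 1 := by
    intro y hy
    have h1 : ‖sHat y‖ ≠ 0 := (hm.trans (hb y hy).2).ne'
    have h2 : ‖‖sHat y‖⁻¹ • sHat y‖ = 1 := by
      rw [norm_smul, norm_inv, norm_norm, inv_mul_cancel₀ h1]
    calc ‖g y‖ = |⟪‖sHat y‖⁻¹ • sHat y, R⁻¹ • (y - x₀)⟫_ℝ| := rfl
      _ ≤ ‖‖sHat y‖⁻¹ • sHat y‖ * ‖R⁻¹ • (y - x₀)‖ := abs_real_inner_le_norm _ _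
      _ = 1 := by rw [h2, hw y hy, mul_one]
  have hif : IntegrableOn f (sphere x₀ R) (μH[(n : ℝ)]) := by
    refine (integrable_const (1:ℝ)).mono' hmf ?_
    exact (ae_restrict_iff' (isClosed_sphere.measurableSet)).2 (Filter.Eventually.of_forall hbf)
  have hig : IntegrableOn g (sphere x₀ R) (μH[(n : ℝ)]) := by
    refine (integrable_const (1:ℝ)).mono' hmg ?_
    exact (ae_restrict_iff' (isClosed_sphere.measurableSet)).2 (Filter.Eventually.of_forall hbg)
  have hdiffb : ∀ y ∈ sphere x₀ R, ‖f y - g y‖ ≤ 2 * δ / m := by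
    intro y hy
    have h1 : f y - g y = ⟪‖s y‖⁻¹ • s y - ‖sHat y‖⁻¹ • sHat y, R⁻¹ • (y - x₀)⟫_ℝ := by
      rw [hf_def, hg_def]; simp [inner_sub_left]
    rw [h1, Real.norm_eq_abs]
    calc |⟪‖s y‖⁻¹ • s y - ‖sHat y‖⁻¹ • sHat y, R⁻¹ • (y - x₀)⟫_ℝ|
        ≤ ‖‖s y‖⁻¹ • s y - ‖sHat y‖⁻¹ • sHat y‖ * ‖R⁻¹ • (y - x₀)‖ :=
          abs_real_inner_le_norm _ _
      _ = ‖‖s y‖⁻¹ • s y - ‖sHat y‖⁻¹ • sHat y‖ := by rw [hw y hy, mul_one]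
      _ ≤ 2 / m * ‖s y - sHat y‖ :=
          normalize_sub_le _ _ m hm (hb y hy).1.le (hb y hy).2.le
      _ ≤ 2 / m * δ := by
          gcongr
          exact (ha y hy).le
      _ = 2 * δ / m := by ring
  have hsub : (∫ y in sphere x₀ R, f y ∂(μH[(n : ℝ)])) -
      (∫ y in sphere x₀ R, g y ∂(μH[(n : ℝ)])) =
      ∫ y in sphere x₀ R, (f y - g y) ∂(μH[(n : ℝ)]) :=
    (integral_sub hif hig).symm
  have hkey : ‖∫ y in sphere x₀ R, (f y - g y) ∂(μH[(n : ℝ)])‖ ≤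
      2 * δ / m * (μH[(n : ℝ)] (sphere x₀ R)).toReal :=
    by have := norm_setIntegral_le_of_norm_le_const hfin hdiffb; exact this
  set V := (volume (ball x₀ R)).toReal with hV
  have hV0 : 0 ≤ V⁻¹ := inv_nonneg.2 ENNReal.toReal_nonneg
  set I1 := ∫ y in sphere x₀ R, f y ∂(μH[(n : ℝ)])
  set I2 := ∫ y in sphere x₀ R, g y ∂(μH[(n : ℝ)])
  set T := (μH[(n : ℝ)] (sphere x₀ R)).toReal with hT
  calc |V⁻¹ * I1 - V⁻¹ * I2| = V⁻¹ * |I1 - I2| := by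
        rw [← mul_sub, abs_mul, abs_of_nonneg hV0]
    _ ≤ V⁻¹ * (2 * δ / m * T) := by
        apply mul_le_mul_of_nonneg_left _ hV0
        rw [hsub]
        exact hkey
    _ = T / V * (2 * δ / m) := by ring
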